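/- Let k ≥ 1 be an integer and let G be a properly edge-colored graph with |V(G)| ≥ 8k and average color degree d̂(G) ≥ 2k. Then G contains a rainbow matching of size k. -/

import Mathlib

/-- The color degree of a vertex `v`: the number of distinct colors appearing
on edges of `G` incident to `v`. -/
noncomputable def colorDegree {V : Type*} (G : SimpleGraph V) (c : Sym2 V → ℕ) (v : V) : ℕ :=
  (c '' {e : Sym2 V | e ∈ G.edgeSet ∧ v ∈ e}).ncard

/-- `M` is a rainbow matching in the edge-colored graph `(G, c)`:
a set of edges of `G`, pairwise vertex-disjoint, with pairwise distinct colors. -/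
def IsRainbowMatching {V : Type*} (G : SimpleGraph V) (c : Sym2 V → ℕ)
    (M : Finset (Sym2 V)) : Prop :=
  ↑M ⊆ G.edgeSet ∧
  (∀ e ∈ M, ∀ f ∈ M, e ≠ f → ∀ v : V, v ∈ e → v ∉ f) ∧
  Set.InjOn c ↑M

namespace RainbowAux

set_option linter.unusedSectionVars false

variable {V : Type*} [DecidableEq V]

/-- The two endpoints of an unordered pair, as a `Finset`. -/
def epts : Sym2 V → Finset V :=
  Sym2.lift ⟨fun x y => {x, y}, fun x y => by simp [Finset.pair_comm]⟩

@[simp] lemma epts_mk (x y : V) : epts s(x, y) = {x, y} :=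
  Sym2.lift_mk _ x y

lemma mem_epts {v : V} {e : Sym2 V} : v ∈ epts e ↔ v ∈ e := by
  induction e using Sym2.ind with
  | _ x y => simp [Sym2.mem_iff]

lemma rainbow_subset {G : SimpleGraph V} {c : Sym2 V → ℕ} {M N : Finset (Sym2 V)}
    (h : IsRainbowMatching G c M) (hNM : N ⊆ M) : IsRainbowMatching G c N :=
  ⟨Set.Subset.trans (Finset.coe_subset.mpr hNM) h.1,
   fun e he f hf => h.2.1 e (hNM he) f (hNM hf),
   h.2.2.mono (Finset.coe_subset.mpr hNM)⟩

lemma rainbow_insert {G : SimpleGraph V} {c : Sym2 V → ℕ} {M : Finset (Sym2 V)}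
    (h : IsRainbowMatching G c M) {a b : V}
    (hab : G.Adj a b) (hva : ∀ g ∈ M, a ∉ g) (hvb : ∀ g ∈ M, b ∉ g)
    (hc : ∀ g ∈ M, c g ≠ c s(a, b)) :
    IsRainbowMatching G c (insert s(a, b) M) ∧ (insert s(a, b) M).card = M.card + 1 := by
  have hnm : s(a, b) ∉ M := fun hmem => hva _ hmem (Sym2.mem_mk_left a b)
  have hdisj2 : ∀ g ∈ M, ∀ v, v ∈ s(a, b) → v ∉ g := by
    intro g hg v hv
    rcases Sym2.mem_iff.mp hv with rfl | rfl
    · exact hva g hg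
    · exact hvb g hg
  refine ⟨⟨?_, ?_, ?_⟩, Finset.card_insert_of_notMem hnm⟩
  · intro e he
    rw [Finset.coe_insert] at he
    rcases Set.mem_insert_iff.mp he with rfl | he
    · exact G.mem_edgeSet.mpr hab
    · exact h.1 he
  · intro e he f hf hef v hv
    rcases Finset.mem_insert.mp he with rfl | he'
    · rcases Finset.mem_insert.mp hf with rfl | hf'
      · exact absurd rfl hef
      · exact hdisj2 f hf' v hv
    · rcases Finset.mem_insert.mp hf with rfl | hf'
      · intro hvf; exact hdisj2 e he' v hvf hv
      · exact h.2.1 e he' f hf' hef v hv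
  · intro e he f hf hcef
    rw [Finset.coe_insert] at he hf
    rcases Set.mem_insert_iff.mp he with rfl | he'
    · rcases Set.mem_insert_iff.mp hf with rfl | hf'
      · rfl
      · exact absurd hcef.symm (hc f hf')
    · rcases Set.mem_insert_iff.mp hf with rfl | hf'
      · exact absurd hcef (hc e he')
      · exact h.2.2 he' hf' hcef

end RainbowAux

open Finset RainbowAux


private lemma arith_contra (k m b n u d : ℕ) (hk : m + 1 ≤ k) (hn : 8 * k ≤ n)
    (hu : n = u + 2 * m) (hd : m = d + b)
    (hfin : 2 * k * n ≤ d * u + 2 * (b * (u + d) + d * (2 * m + 8)) + 2 * m * (2 * m)) :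
    False := by
  have hu6 : 6 * m + 8 ≤ u := by omega
  have hfinZ : (2 : ℤ) * k * n ≤ d * u + 2 * (b * (u + d) + d * (2 * m + 8))
      + 2 * m * (2 * m) := by exact_mod_cast hfin
  have hkZ : (m : ℤ) + 1 ≤ k := by exact_mod_cast hk
  have hnZ : (8 : ℤ) * k ≤ n := by exact_mod_cast hn
  have huZ : (n : ℤ) = u + 2 * m := by exact_mod_cast hu
  have hdZ : (m : ℤ) = d + b := by exact_mod_cast hd
  have hu6Z : (6 : ℤ) * m + 8 ≤ u := by exact_mod_cast hu6
  have hb0 : (0 : ℤ) ≤ b := by positivity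
  have hd0 : (0 : ℤ) ≤ d := by positivity
  have hm0 : (0 : ℤ) ≤ m := by positivity
  have hu0 : (0 : ℤ) ≤ u := by positivity
  nlinarith [sq_nonneg ((d : ℤ) - 2),
    mul_nonneg (by linarith : (0 : ℤ) ≤ 2 * (k : ℤ) - (2 * m + 2)) hu0,
    mul_nonneg (by linarith : (0 : ℤ) ≤ (k : ℤ) - (m + 1)) hm0,
    mul_nonneg (by linarith : (0 : ℤ) ≤ (d : ℤ) + 2) (by linarith : (0 : ℤ) ≤ (u : ℤ) - (6 * m + 8))]

/-- Kritschgau: every properly edge-colored graph on at least `8k` vertices with average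
color degree at least `2k` contains a rainbow matching of size `k`. -/
theorem rainbow_matching_properly_colored_avg_color_degree
    {V : Type*} [Fintype V] (k : ℕ) (hk : 1 ≤ k)
    (G : SimpleGraph V) (c : Sym2 V → ℕ)
    (hproper : ∀ e ∈ G.edgeSet, ∀ f ∈ G.edgeSet, e ≠ f → (∃ v : V, v ∈ e ∧ v ∈ f) →
      c e ≠ c f)
    (hn : 8 * k ≤ Fintype.card V)
    (havg : (2 * (k : ℚ)) ≤ (∑ v, (colorDegree G c v : ℚ)) / (Fintype.card V : ℚ)) :
    ∃ M : Finset (Sym2 V), IsRainbowMatching G c M ∧ M.card = k := by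
  classical
  set n := Fintype.card V with hndef
  have hnpos : 0 < n := by omega
  -- distinct edges at a common vertex have distinct colors
  have hinj : ∀ z w₁ w₂ : V, G.Adj z w₁ → G.Adj z w₂ → c s(z, w₁) = c s(z, w₂) → w₁ = w₂ := by
    intro z w₁ w₂ h1 h2 hcc
    by_contra hne
    have hne' : s(z, w₁) ≠ s(z, w₂) := by
      intro h
      rcases (Sym2.mk_eq_mk_iff (p := (z, w₁)) (q := (z, w₂))).mp h with h' | h'
      · simp only [Prod.mk.injEq] at h'
        exact hne h'.2
      · simp only [Prod.swap_prod_mk, Prod.mk.injEq] at h'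
        exact hne (h'.2.trans h'.1)
    exact hproper _ (G.mem_edgeSet.mpr h1) _ (G.mem_edgeSet.mpr h2) hne'
      ⟨z, Sym2.mem_mk_left _ _, Sym2.mem_mk_left _ _⟩ hcc
  -- color degree equals degree
  have hdd : ∀ v : V, colorDegree G c v = (univ.filter (fun w => G.Adj v w)).card := by
    intro v
    have hset : {e : Sym2 V | e ∈ G.edgeSet ∧ v ∈ e}
        = ↑((univ.filter (fun w => G.Adj v w)).image (fun w => s(v, w))) := by
      ext e
      simp only [Set.mem_setOf_eq, Finset.coe_image, Set.mem_image, Finset.mem_coe,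
        Finset.mem_filter, Finset.mem_univ, true_and]
      constructor
      · rintro ⟨heE, hve⟩
        obtain ⟨w, rfl⟩ := Sym2.mem_iff_exists.mp hve
        exact ⟨w, G.mem_edgeSet.mp heE, rfl⟩
      · rintro ⟨w, hadj, rfl⟩
        exact ⟨G.mem_edgeSet.mpr hadj, Sym2.mem_mk_left v w⟩
    unfold colorDegree
    rw [hset, ← Finset.coe_image, Set.ncard_coe_finset, Finset.image_image]
    apply Finset.card_image_of_injOn
    intro w₁ h₁ w₂ h₂ hcc
    simp only [Finset.coe_filter, Set.mem_setOf_eq, Finset.mem_univ, true_and] at h₁ h₂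
    exact hinj v w₁ w₂ h₁ h₂ hcc
  -- the degree sum is at least 2kn
  have hsum : 2 * k * n ≤ ∑ v : V, (univ.filter (fun w => G.Adj v w)).card := by
    have hq : (2 * (k : ℚ)) * (n : ℚ) ≤ ∑ v : V, (colorDegree G c v : ℚ) :=
      (le_div_iff₀ (by exact_mod_cast hnpos)).mp havg
    have he : (∑ v : V, (colorDegree G c v : ℚ))
        = ((∑ v : V, (univ.filter (fun w => G.Adj v w)).card : ℕ) : ℚ) := by
      push_cast
      exact Finset.sum_congr rfl (fun v _ => by rw [hdd v])
    rw [he] at hq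
    exact_mod_cast hq
  -- a maximum rainbow matching
  obtain ⟨M, hM, hmax⟩ :
      ∃ M : Finset (Sym2 V), IsRainbowMatching G c M ∧
        ∀ N : Finset (Sym2 V), IsRainbowMatching G c N → N.card ≤ M.card := by
    have hne : (G.edgeFinset.powerset.filter (fun N => IsRainbowMatching G c N)).Nonempty := by
      refine ⟨∅, Finset.mem_filter.mpr ⟨Finset.mem_powerset.mpr (Finset.empty_subset _), ?_, ?_, ?_⟩⟩
      · rw [Finset.coe_empty]; exact Set.empty_subset _
      · intro e he; exact absurd he (Finset.notMem_empty e)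
      · rw [Finset.coe_empty]; exact Set.injOn_empty c
    obtain ⟨M, hMmem, hMmax⟩ := Finset.exists_max_image _ Finset.card hne
    refine ⟨M, (Finset.mem_filter.mp hMmem).2, ?_⟩
    intro N hN
    exact hMmax N (Finset.mem_filter.mpr ⟨Finset.mem_powerset.mpr
      (fun e he => SimpleGraph.mem_edgeFinset.mpr (hN.1 (Finset.mem_coe.mpr he))), hN⟩)
  by_cases hk' : k ≤ M.card
  · obtain ⟨T, hTM, hTcard⟩ := Finset.exists_subset_card_eq hk'
    exact ⟨T, rainbow_subset hM hTM, hTcard⟩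
  push_neg at hk'
  exfalso
  set m := M.card with hmdef
  have hMedge : ∀ e ∈ M, e ∈ G.edgeSet := fun e he => hM.1 (Finset.mem_coe.mpr he)
  have hMdisj : ∀ e ∈ M, ∀ f ∈ M, e ≠ f → ∀ v, v ∈ e → v ∉ f := hM.2.1
  have hMinj : Set.InjOn c ↑M := hM.2.2
  have hrep : ∀ e, e ∈ M → ∃ x y : V, e = s(x, y) ∧ G.Adj x y := by
    intro e
    induction e using Sym2.ind with
    | _ x y => exact fun he => ⟨x, y, rfl, G.mem_edgeSet.mp (hMedge _ he)⟩
  set W : Finset V := M.biUnion epts with hWdef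
  set U : Finset V := Wᶜ with hUdef
  have hUW : ∀ w ∈ U, ∀ g ∈ M, w ∉ g := by
    intro w hw g hg hmem
    exact (Finset.mem_compl.mp hw) (Finset.mem_biUnion.mpr ⟨g, hg, mem_epts.mpr hmem⟩)
  have heptscard : ∀ e, e ∈ M → (epts e).card = 2 := by
    intro e he
    obtain ⟨x, y, rfl, hadj⟩ := hrep e he
    rw [epts_mk]
    exact Finset.card_pair hadj.ne
  have heptsdisj : ∀ e ∈ M, ∀ f ∈ M, e ≠ f → Disjoint (epts e) (epts f) := by
    intro e he f hf hef
    rw [Finset.disjoint_left]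
    intro v hv hv'
    exact hMdisj e he f hf hef v (mem_epts.mp hv) (mem_epts.mp hv')
  have hWcard : W.card = 2 * m := by
    rw [hWdef, Finset.card_biUnion heptsdisj,
      Finset.sum_congr rfl heptscard, Finset.sum_const, smul_eq_mul]
    omega
  have hUcard : U.card = n - 2 * m := by
    rw [hUdef, Finset.card_compl, hWcard]
  set cM : Finset ℕ := M.image c with hcMdef
  have hcMcard : cM.card = m := Finset.card_image_of_injOn hMinj
  have hcM_mem : ∀ g ∈ M, c g ∈ cM := fun g hg => Finset.mem_image_of_mem c hg
  have hcM_inj : ∀ g ∈ M, ∀ e ∈ M, c g = c e → g = e := fun g hg e he hc =>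
    hMinj (Finset.mem_coe.mpr hg) (Finset.mem_coe.mpr he) hc
  -- counting helper
  have hcnt : ∀ (z : V) (s : Finset V) (C : Finset ℕ),
      (∀ w ∈ s, G.Adj z w) → (∀ w ∈ s, c s(z, w) ∈ C) → s.card ≤ C.card := by
    intro z s C h2 h1
    exact Finset.card_le_card_of_injOn (fun w => c s(z, w)) h1
      (fun w₁ hw₁ w₂ hw₂ hcc =>
        hinj z w₁ w₂ (h2 w₁ hw₁) (h2 w₂ hw₂) hcc)
  -- P1 : edges inside U have colors of M
  have hP1 : ∀ w ∈ U, ∀ w' ∈ U, G.Adj w w' → c s(w, w') ∈ cM := by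
    intro w hw w' hw' hadj
    by_contra hcnew
    have hins := rainbow_insert hM hadj (hUW w hw) (hUW w' hw')
      (fun g hg hcg => hcnew (hcg ▸ hcM_mem g hg))
    have hle := hmax _ hins.1
    rw [hins.2] at hle
    omega
  -- P2 : the key swap fact
  have hP2 : ∀ x y u w : V, s(x, y) ∈ M → u ∈ U → w ∈ U → u ≠ w → G.Adj x u → G.Adj y w →
      c s(x, u) ∉ cM → c s(y, w) ∉ cM → c s(x, u) = c s(y, w) := by
    intro x y u w he hu hw huw hxu hyw hcu hcw
    by_contra hne
    have hadjxy : G.Adj x y := G.mem_edgeSet.mp (hMedge _ he)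
    have hN0r : IsRainbowMatching G c (M.erase s(x, y)) :=
      rainbow_subset hM (Finset.erase_subset _ _)
    have hxN0 : ∀ g ∈ M.erase s(x, y), x ∉ g := fun g hg =>
      hMdisj _ he g (Finset.mem_of_mem_erase hg) (Ne.symm (Finset.ne_of_mem_erase hg)) x
        (Sym2.mem_mk_left x y)
    have hyN0 : ∀ g ∈ M.erase s(x, y), y ∉ g := fun g hg =>
      hMdisj _ he g (Finset.mem_of_mem_erase hg) (Ne.symm (Finset.ne_of_mem_erase hg)) y
        (Sym2.mem_mk_right x y)
    have hUN0 : ∀ v ∈ U, ∀ g ∈ M.erase s(x, y), v ∉ g := fun v hv g hg =>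
      hUW v hv g (Finset.mem_of_mem_erase hg)
    have hcN0 : ∀ g ∈ M.erase s(x, y), c g ∈ cM := fun g hg =>
      hcM_mem g (Finset.mem_of_mem_erase hg)
    have hins1 := rainbow_insert hN0r hxu hxN0 (hUN0 u hu)
      (fun g hg hcg => hcu (hcg ▸ hcN0 g hg))
    have hyN1 : ∀ g ∈ insert s(x, u) (M.erase s(x, y)), y ∉ g := by
      intro g hg
      rcases Finset.mem_insert.mp hg with rfl | hg'
      · intro hmem
        rcases Sym2.mem_iff.mp hmem with h | h
        · exact hadjxy.ne' h
        · exact hUW u hu _ he (by rw [← h]; exact Sym2.mem_mk_right x y)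
      · exact hyN0 g hg'
    have hwN1 : ∀ g ∈ insert s(x, u) (M.erase s(x, y)), w ∉ g := by
      intro g hg
      rcases Finset.mem_insert.mp hg with rfl | hg'
      · intro hmem
        rcases Sym2.mem_iff.mp hmem with h | h
        · exact hUW w hw _ he (by rw [h]; exact Sym2.mem_mk_left x y)
        · exact huw h.symm
      · exact hUN0 w hw g hg'
    have hcN1 : ∀ g ∈ insert s(x, u) (M.erase s(x, y)), c g ≠ c s(y, w) := by
      intro g hg
      rcases Finset.mem_insert.mp hg with rfl | hg'
      · exact hne
      · intro hcg; exact hcw (hcg ▸ hcN0 g hg')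
    have hins2 := rainbow_insert hins1.1 hyw hyN1 hwN1 hcN1
    have hle := hmax _ hins2.1
    rw [hins2.2, hins1.2, Finset.card_erase_of_mem he] at hle
    have hMpos : 1 ≤ M.card := Finset.card_pos.mpr ⟨_, he⟩
    omega
  -- new-colored U-neighbours, membership
  have hnU_mem : ∀ z v : V, v ∈ (U.filter (fun w => G.Adj z w)).filter
      (fun w => c s(z, w) ∉ cM) ↔ v ∈ U ∧ G.Adj z v ∧ c s(z, v) ∉ cM := by
    intro z v
    simp only [Finset.mem_filter, and_assoc]
  -- if both sides of an edge of M see new colors, each side sees at most 2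
  have hP3aux : ∀ x y : V, s(x, y) ∈ M →
      ((U.filter (fun w => G.Adj y w)).filter (fun w => c s(y, w) ∉ cM)).Nonempty →
      ((U.filter (fun w => G.Adj x w)).filter (fun w => c s(x, w) ∉ cM)).card ≤ 2 := by
    intro x y he hne
    obtain ⟨w, hwmem⟩ := hne
    have hw := (hnU_mem y w).mp hwmem
    have hsub : (U.filter (fun v => G.Adj x v)).filter (fun v => c s(x, v) ∉ cM) ⊆
        insert w (((U.filter (fun v => G.Adj x v)).filter (fun v => c s(x, v) ∉ cM)).filter
          (fun v => c s(x, v) = c s(y, w))) := by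
      intro v hv
      have hv' := (hnU_mem x v).mp hv
      by_cases hvw : v = w
      · rw [hvw]; exact Finset.mem_insert_self _ _
      · exact Finset.mem_insert_of_mem (Finset.mem_filter.mpr ⟨hv,
          hP2 x y v w he hv'.1 hw.1 hvw hv'.2.1 hw.2.1 hv'.2.2 hw.2.2⟩)
    have hone : ((((U.filter (fun v => G.Adj x v)).filter (fun v => c s(x, v) ∉ cM))).filter
        (fun v => c s(x, v) = c s(y, w))).card ≤ 1 := by
      rw [Finset.card_le_one]
      intro a ha a' ha'
      have ha1 := (hnU_mem x a).mp (Finset.mem_filter.mp ha).1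
      have ha2 := (hnU_mem x a').mp (Finset.mem_filter.mp ha').1
      exact hinj x a a' ha1.2.1 ha2.2.1
        (((Finset.mem_filter.mp ha).2).trans ((Finset.mem_filter.mp ha').2).symm)
    have h1 := Finset.card_le_card hsub
    have h2 := Finset.card_insert_le w
      ((((U.filter (fun v => G.Adj x v)).filter (fun v => c s(x, v) ∉ cM))).filter
        (fun v => c s(x, v) = c s(y, w)))
    omega
  set B : Finset (Sym2 V) := M.filter (fun e => 5 ≤ ∑ z ∈ epts e,
    ((U.filter (fun w => G.Adj z w)).filter (fun w => c s(z, w) ∉ cM)).card) with hBdef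
  set b := B.card with hbdef
  have hBM : B ⊆ M := Finset.filter_subset _ _
  have hbm : b ≤ m := Finset.card_le_card hBM
  set cB : Finset ℕ := B.image c with hcBdef
  have hcBcard : cB.card = b := Finset.card_image_of_injOn
    (hMinj.mono (Finset.coe_subset.mpr hBM))
  have hcBsub : cB ⊆ cM := Finset.image_subset_image hBM
  have hsdiff : (cM \ cB).card = m - b := by
    rw [Finset.card_sdiff_of_subset hcBsub, hcMcard, hcBcard]
  -- each edge of B has a distinguished zero side and a ≥ 5 side
  have hHit : ∀ e ∈ B, ∃ x y : V, e = s(x, y) ∧ G.Adj x y ∧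
      ((U.filter (fun w => G.Adj y w)).filter (fun w => c s(y, w) ∉ cM)).card = 0 ∧
      5 ≤ ((U.filter (fun w => G.Adj x w)).filter (fun w => c s(x, w) ∉ cM)).card := by
    intro e heB
    have heM := hBM heB
    have hs5 : 5 ≤ ∑ z ∈ epts e,
        ((U.filter (fun w => G.Adj z w)).filter (fun w => c s(z, w) ∉ cM)).card := by
      rw [hBdef] at heB
      exact (Finset.mem_filter.mp heB).2
    obtain ⟨x, y, rfl, hadj⟩ := hrep e heM
    rw [epts_mk, Finset.sum_pair hadj.ne] at hs5
    by_cases hx0 : ((U.filter (fun w => G.Adj x w)).filter (fun w => c s(x, w) ∉ cM)).card = 0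
    · exact ⟨y, x, Sym2.eq_swap, hadj.symm, hx0, by omega⟩
    · have hy0 : ((U.filter (fun w => G.Adj y w)).filter (fun w => c s(y, w) ∉ cM)).card = 0 := by
        by_contra hy0
        have h1 : ((U.filter (fun w => G.Adj x w)).filter (fun w => c s(x, w) ∉ cM)).card ≤ 2 :=
          hP3aux x y heM (Finset.card_pos.mp (Nat.pos_of_ne_zero hy0))
        have h2 : ((U.filter (fun w => G.Adj y w)).filter (fun w => c s(y, w) ∉ cM)).card ≤ 2 :=
          hP3aux y x (by rw [Sym2.eq_swap]; exact heM) (Finset.card_pos.mp (Nat.pos_of_ne_zero hx0))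
        omega
      exact ⟨x, y, rfl, hadj, hy0, by omega⟩
  -- P4 : U-U edges avoid colors of B
  have hP4 : ∀ e ∈ B, ∀ w ∈ U, ∀ w' ∈ U, G.Adj w w' → c s(w, w') ≠ c e := by
    intro e heB w hw w' hw' hadj hceq
    have heM := hBM heB
    obtain ⟨x, y, rfl, hadjxy, hy0, hx5⟩ := hHit e heB
    -- pick u in the big side avoiding w, w'
    have hcard : 1 ≤ (((U.filter (fun v => G.Adj x v)).filter (fun v => c s(x, v) ∉ cM))
        \ {w, w'}).card := by
      have h1 := Finset.le_card_sdiff ({w, w'} : Finset V)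
        ((U.filter (fun v => G.Adj x v)).filter (fun v => c s(x, v) ∉ cM))
      have h2 : ({w, w'} : Finset V).card ≤ 2 := Finset.card_insert_le _ _
      omega
    obtain ⟨u, hu⟩ := Finset.card_pos.mp hcard
    obtain ⟨huX, huw⟩ := Finset.mem_sdiff.mp hu
    have hu' := (hnU_mem x u).mp huX
    have huw1 : u ≠ w := fun h => huw (by rw [h]; exact Finset.mem_insert_self _ _)
    have huw2 : u ≠ w' := fun h => huw
      (by rw [h]; exact Finset.mem_insert_of_mem (Finset.mem_singleton_self _))
    -- build a larger rainbow matching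
    have hN0r : IsRainbowMatching G c (M.erase s(x, y)) :=
      rainbow_subset hM (Finset.erase_subset _ _)
    have hxN0 : ∀ g ∈ M.erase s(x, y), x ∉ g := fun g hg =>
      hMdisj _ heM g (Finset.mem_of_mem_erase hg) (Ne.symm (Finset.ne_of_mem_erase hg)) x
        (Sym2.mem_mk_left x y)
    have hUN0 : ∀ v ∈ U, ∀ g ∈ M.erase s(x, y), v ∉ g := fun v hv g hg =>
      hUW v hv g (Finset.mem_of_mem_erase hg)
    have hcN0 : ∀ g ∈ M.erase s(x, y), c g ∈ cM := fun g hg =>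
      hcM_mem g (Finset.mem_of_mem_erase hg)
    have hins1 := rainbow_insert hN0r hu'.2.1 hxN0 (hUN0 u hu'.1)
      (fun g hg hcg => hu'.2.2 (hcg ▸ hcN0 g hg))
    have hwN1 : ∀ g ∈ insert s(x, u) (M.erase s(x, y)), w ∉ g := by
      intro g hg
      rcases Finset.mem_insert.mp hg with rfl | hg'
      · intro hmem
        rcases Sym2.mem_iff.mp hmem with h | h
        · exact hUW w hw _ heM (by rw [h]; exact Sym2.mem_mk_left x y)
        · exact huw1 h.symm
      · exact hUN0 w hw g hg'
    have hw'N1 : ∀ g ∈ insert s(x, u) (M.erase s(x, y)), w' ∉ g := by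
      intro g hg
      rcases Finset.mem_insert.mp hg with rfl | hg'
      · intro hmem
        rcases Sym2.mem_iff.mp hmem with h | h
        · exact hUW w' hw' _ heM (by rw [h]; exact Sym2.mem_mk_left x y)
        · exact huw2 h.symm
      · exact hUN0 w' hw' g hg'
    have hcN1 : ∀ g ∈ insert s(x, u) (M.erase s(x, y)), c g ≠ c s(w, w') := by
      intro g hg
      rcases Finset.mem_insert.mp hg with rfl | hg'
      · intro hcg
        exact hu'.2.2 (by rw [hcg, hceq]; exact hcM_mem _ heM)
      · intro hcg
        have hge : g = s(x, y) := hcM_inj g (Finset.mem_of_mem_erase hg') _ heM (hcg.trans hceq)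
        exact Finset.ne_of_mem_erase hg' hge
    have hins2 := rainbow_insert hins1.1 hadj hwN1 hw'N1 hcN1
    have hle := hmax _ hins2.1
    rw [hins2.2, hins1.2, Finset.card_erase_of_mem heM] at hle
    have hMpos : 1 ≤ M.card := Finset.card_pos.mpr ⟨_, heM⟩
    omega
  -- P5 : edges from the zero side of an edge of B to U avoid colors of B
  have hP5 : ∀ e ∈ B, ∀ x y : V, e = s(x, y) →
      ((U.filter (fun w => G.Adj y w)).filter (fun w => c s(y, w) ∉ cM)).card = 0 →
      5 ≤ ((U.filter (fun w => G.Adj x w)).filter (fun w => c s(x, w) ∉ cM)).card →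
      ∀ w ∈ U, G.Adj y w → ∀ f ∈ B, c s(y, w) ≠ c f := by
    intro e heB x y hexy hy0 hx5 w hw hadjyw f hfB hceq
    have heM := hBM heB
    have hfM := hBM hfB
    subst hexy
    have hadjxy : G.Adj x y := G.mem_edgeSet.mp (hMedge _ heM)
    by_cases hfe : f = s(x, y)
    · -- the color of the edge itself is excluded by properness at y
      have hne : s(y, w) ≠ s(x, y) := by
        intro hEq
        exact hUW w hw _ heM (by rw [← hEq]; exact Sym2.mem_mk_right y w)
      exact hproper s(y, w) (G.mem_edgeSet.mpr hadjyw) s(x, y) (hMedge _ heM) hne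
        ⟨y, Sym2.mem_mk_left y w, Sym2.mem_mk_right x y⟩ (by rw [hceq, hfe])
    · obtain ⟨fx, fy, hfxy, hadjf, hfy0, hfx5⟩ := hHit f hfB
      subst hfxy
      have hef : s(x, y) ≠ s(fx, fy) := fun h => hfe h.symm
      have hdisj_ef : ∀ v, v ∈ s(x, y) → v ∉ s(fx, fy) := hMdisj _ heM _ hfM hef
      -- choose u in the big side of e, avoiding w
      have hcardu : 0 < (((U.filter (fun v => G.Adj x v)).filter (fun v => c s(x, v) ∉ cM))
          \ {w}).card := by
        have h1 := Finset.le_card_sdiff ({w} : Finset V)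
          ((U.filter (fun v => G.Adj x v)).filter (fun v => c s(x, v) ∉ cM))
        have h2 : ({w} : Finset V).card = 1 := Finset.card_singleton w
        omega
      obtain ⟨u, hu⟩ := Finset.card_pos.mp hcardu
      obtain ⟨huX, huw'⟩ := Finset.mem_sdiff.mp hu
      have hu' := (hnU_mem x u).mp huX
      have huw : u ≠ w := fun h => huw' (by rw [h]; exact Finset.mem_singleton_self _)
      -- choose u' in the big side of f, avoiding w, u, and the color of s(x,u)
      have hbadcard : (((((U.filter (fun v => G.Adj fx v)).filter (fun v => c s(fx, v) ∉ cM))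
          \ {w, u}).filter (fun v => ¬ c s(fx, v) ≠ c s(x, u)))).card ≤ 1 := by
        rw [Finset.card_le_one]
        intro a ha a' ha'
        obtain ⟨ha1, ha2⟩ := Finset.mem_filter.mp ha
        obtain ⟨ha1', ha2'⟩ := Finset.mem_filter.mp ha'
        have hm1 := (hnU_mem fx a).mp (Finset.mem_sdiff.mp ha1).1
        have hm2 := (hnU_mem fx a').mp (Finset.mem_sdiff.mp ha1').1
        exact hinj fx a a' hm1.2.1 hm2.2.1 ((not_not.mp ha2).trans (not_not.mp ha2').symm)
      have hcardu' : 0 < ((((U.filter (fun v => G.Adj fx v)).filter (fun v => c s(fx, v) ∉ cM))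
          \ {w, u}).filter (fun v => c s(fx, v) ≠ c s(x, u))).card := by
        have h0 := Finset.card_filter_add_card_filter_not
          (s := ((U.filter (fun v => G.Adj fx v)).filter (fun v => c s(fx, v) ∉ cM)) \ {w, u})
          (p := fun v => c s(fx, v) ≠ c s(x, u))
        have h1 := Finset.le_card_sdiff ({w, u} : Finset V)
          ((U.filter (fun v => G.Adj fx v)).filter (fun v => c s(fx, v) ∉ cM))
        have h2 : ({w, u} : Finset V).card ≤ 2 := Finset.card_insert_le _ _
        omega
      obtain ⟨u', hu'mem⟩ := Finset.card_pos.mp hcardu'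
      obtain ⟨hu'sd, hu'c⟩ := Finset.mem_filter.mp hu'mem
      obtain ⟨hu'X, hu'wu⟩ := Finset.mem_sdiff.mp hu'sd
      have hu'' := (hnU_mem fx u').mp hu'X
      have hu'w : u' ≠ w := fun h => hu'wu (by rw [h]; exact Finset.mem_insert_self _ _)
      have hu'u : u' ≠ u := fun h => hu'wu
        (by rw [h]; exact Finset.mem_insert_of_mem (Finset.mem_singleton_self _))
      -- the base matching with e and f removed
      have hfN : s(fx, fy) ∈ M.erase s(x, y) := Finset.mem_erase.mpr ⟨hfe, hfM⟩
      have hN0r : IsRainbowMatching G c ((M.erase s(x, y)).erase s(fx, fy)) :=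
        rainbow_subset hM ((Finset.erase_subset _ _).trans (Finset.erase_subset _ _))
      have hN0mem : ∀ g ∈ (M.erase s(x, y)).erase s(fx, fy),
          g ∈ M ∧ g ≠ s(x, y) ∧ g ≠ s(fx, fy) := by
        intro g hg
        obtain ⟨hgf, hg1⟩ := Finset.mem_erase.mp hg
        obtain ⟨hge, hgM⟩ := Finset.mem_erase.mp hg1
        exact ⟨hgM, hge, hgf⟩
      have hxN0 : ∀ g ∈ (M.erase s(x, y)).erase s(fx, fy), x ∉ g := by
        intro g hg
        obtain ⟨hgM, hge, _⟩ := hN0mem g hg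
        exact hMdisj _ heM g hgM (Ne.symm hge) x (Sym2.mem_mk_left x y)
      have hyN0 : ∀ g ∈ (M.erase s(x, y)).erase s(fx, fy), y ∉ g := by
        intro g hg
        obtain ⟨hgM, hge, _⟩ := hN0mem g hg
        exact hMdisj _ heM g hgM (Ne.symm hge) y (Sym2.mem_mk_right x y)
      have hfxN0 : ∀ g ∈ (M.erase s(x, y)).erase s(fx, fy), fx ∉ g := by
        intro g hg
        obtain ⟨hgM, _, hgf⟩ := hN0mem g hg
        exact hMdisj _ hfM g hgM (Ne.symm hgf) fx (Sym2.mem_mk_left fx fy)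
      have hUN0 : ∀ v ∈ U, ∀ g ∈ (M.erase s(x, y)).erase s(fx, fy), v ∉ g :=
        fun v hv g hg => hUW v hv g (hN0mem g hg).1
      have hcN0 : ∀ g ∈ (M.erase s(x, y)).erase s(fx, fy), c g ∈ cM :=
        fun g hg => hcM_mem g (hN0mem g hg).1
      -- first insertion : s(x, u)
      have hins1 := rainbow_insert hN0r hu'.2.1 hxN0 (fun g hg => hUN0 u hu'.1 g hg)
        (fun g hg hcg => hu'.2.2 (by rw [← hcg]; exact hcN0 g hg))
      -- second insertion : s(fx, u')
      have hfxN1 : ∀ g ∈ insert s(x, u) ((M.erase s(x, y)).erase s(fx, fy)), fx ∉ g := by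
        intro g hg
        rcases Finset.mem_insert.mp hg with rfl | hg'
        · intro hmem
          rcases Sym2.mem_iff.mp hmem with h | h
          · exact hdisj_ef x (Sym2.mem_mk_left x y) (by rw [← h]; exact Sym2.mem_mk_left fx fy)
          · exact hUW u hu'.1 _ hfM (by rw [← h]; exact Sym2.mem_mk_left fx fy)
        · exact hfxN0 g hg'
      have hu'N1 : ∀ g ∈ insert s(x, u) ((M.erase s(x, y)).erase s(fx, fy)), u' ∉ g := by
        intro g hg
        rcases Finset.mem_insert.mp hg with rfl | hg'
        · intro hmem
          rcases Sym2.mem_iff.mp hmem with h | h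
          · exact hUW u' hu''.1 _ heM (by rw [h]; exact Sym2.mem_mk_left x y)
          · exact hu'u h
        · exact hUN0 u' hu''.1 g hg'
      have hcN1 : ∀ g ∈ insert s(x, u) ((M.erase s(x, y)).erase s(fx, fy)),
          c g ≠ c s(fx, u') := by
        intro g hg
        rcases Finset.mem_insert.mp hg with rfl | hg'
        · exact fun hcg => hu'c hcg.symm
        · exact fun hcg => hu''.2.2 (by rw [← hcg]; exact hcN0 g hg')
      have hins2 := rainbow_insert hins1.1 hu''.2.1 hfxN1 hu'N1 hcN1
      -- third insertion : s(y, w)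
      have hcyw : c s(y, w) ∈ cM := by rw [hceq]; exact hcM_mem _ hfM
      have hyN2 : ∀ g ∈ insert s(fx, u')
          (insert s(x, u) ((M.erase s(x, y)).erase s(fx, fy))), y ∉ g := by
        intro g hg
        rcases Finset.mem_insert.mp hg with rfl | hg'
        · intro hmem
          rcases Sym2.mem_iff.mp hmem with h | h
          · exact hdisj_ef y (Sym2.mem_mk_right x y) (by rw [h]; exact Sym2.mem_mk_left fx fy)
          · exact hUW u' hu''.1 _ heM (by rw [← h]; exact Sym2.mem_mk_right x y)
        · rcases Finset.mem_insert.mp hg' with rfl | hg''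
          · intro hmem
            rcases Sym2.mem_iff.mp hmem with h | h
            · exact hadjxy.ne' h
            · exact hUW u hu'.1 _ heM (by rw [← h]; exact Sym2.mem_mk_right x y)
          · exact hyN0 g hg''
      have hwN2 : ∀ g ∈ insert s(fx, u')
          (insert s(x, u) ((M.erase s(x, y)).erase s(fx, fy))), w ∉ g := by
        intro g hg
        rcases Finset.mem_insert.mp hg with rfl | hg'
        · intro hmem
          rcases Sym2.mem_iff.mp hmem with h | h
          · exact hUW w hw _ hfM (by rw [h]; exact Sym2.mem_mk_left fx fy)
          · exact hu'w h.symm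
        · rcases Finset.mem_insert.mp hg' with rfl | hg''
          · intro hmem
            rcases Sym2.mem_iff.mp hmem with h | h
            · exact hUW w hw _ heM (by rw [h]; exact Sym2.mem_mk_left x y)
            · exact huw h.symm
          · exact hUN0 w hw g hg''
      have hcN2 : ∀ g ∈ insert s(fx, u')
          (insert s(x, u) ((M.erase s(x, y)).erase s(fx, fy))), c g ≠ c s(y, w) := by
        intro g hg
        rcases Finset.mem_insert.mp hg with rfl | hg'
        · exact fun hcg => hu''.2.2 (by rw [hcg]; exact hcyw)
        · rcases Finset.mem_insert.mp hg' with rfl | hg''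
          · exact fun hcg => hu'.2.2 (by rw [hcg]; exact hcyw)
          · intro hcg
            have hgf : g = s(fx, fy) := hcM_inj g (hN0mem g hg'').1 _ hfM (hcg.trans hceq)
            exact (hN0mem g hg'').2.2 hgf
      have hins3 := rainbow_insert hins2.1 hadjyw hyN2 hwN2 hcN2
      have hle := hmax _ hins3.1
      rw [hins3.2, hins2.2, hins1.2, Finset.card_erase_of_mem hfN,
        Finset.card_erase_of_mem heM] at hle
      have hm2 : 2 ≤ M.card := by
        have h12 := Finset.one_lt_card.mpr ⟨s(x, y), heM, s(fx, fy), hfM, hef⟩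
        omega
      omega
  -- R1 : small U-degree inside U
  have hR1 : ∀ w ∈ U, (U.filter (fun v => G.Adj w v)).card ≤ m - b := by
    intro w hw
    rw [← hsdiff]
    apply hcnt w _ (cM \ cB)
    · intro v hv; exact (Finset.mem_filter.mp hv).2
    · intro v hv
      obtain ⟨hvU, hadj⟩ := Finset.mem_filter.mp hv
      refine Finset.mem_sdiff.mpr ⟨hP1 w hw v hvU hadj, fun hmem => ?_⟩
      obtain ⟨f, hf, hcf⟩ := Finset.mem_image.mp hmem
      exact hP4 f hf w hw v hvU hadj hcf.symm
  -- R2 : per-edge bound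
  have hR2 : ∀ e ∈ M, (∑ z ∈ epts e, (U.filter (fun w => G.Adj z w)).card) ≤
      (if e ∈ B then (n - 2 * m) + (m - b) else 2 * m + 8) := by
    intro e heM
    by_cases heB : e ∈ B
    · rw [if_pos heB]
      obtain ⟨x, y, rfl, hadj, hy0, hx5⟩ := hHit e heB
      rw [epts_mk, Finset.sum_pair hadj.ne]
      have h1 : (U.filter (fun w => G.Adj x w)).card ≤ n - 2 * m := by
        calc (U.filter (fun w => G.Adj x w)).card ≤ U.card :=
              Finset.card_le_card (Finset.filter_subset _ _)
        _ = n - 2 * m := hUcard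
      have h2 : (U.filter (fun w => G.Adj y w)).card ≤ m - b := by
        rw [← hsdiff]
        apply hcnt y _ (cM \ cB)
        · intro w hw; exact (Finset.mem_filter.mp hw).2
        · intro w hw
          obtain ⟨hwU, hadjyw⟩ := Finset.mem_filter.mp hw
          have hold : c s(y, w) ∈ cM := by
            by_contra hnew
            have hmem : w ∈ (U.filter (fun v => G.Adj y v)).filter
                (fun v => c s(y, v) ∉ cM) := Finset.mem_filter.mpr ⟨hw, hnew⟩
            have := Finset.card_pos.mpr ⟨w, hmem⟩
            omega
          refine Finset.mem_sdiff.mpr ⟨hold, fun hmem => ?_⟩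
          obtain ⟨f, hf, hcf⟩ := Finset.mem_image.mp hmem
          exact hP5 _ heB x y rfl hy0 hx5 w hwU hadjyw f hf hcf.symm
      omega
    · rw [if_neg heB]
      obtain ⟨x, y, rfl, hadj⟩ := hrep e heM
      rw [epts_mk, Finset.sum_pair hadj.ne]
      have hnotB : ¬ (5 ≤ ∑ z ∈ epts s(x, y),
          ((U.filter (fun w => G.Adj z w)).filter (fun w => c s(z, w) ∉ cM)).card) := by
        intro hcon
        exact heB (by rw [hBdef]; exact Finset.mem_filter.mpr ⟨heM, hcon⟩)
      rw [epts_mk, Finset.sum_pair hadj.ne] at hnotB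
      have hsplitz : ∀ z : V, (U.filter (fun w => G.Adj z w)).card
          ≤ ((U.filter (fun w => G.Adj z w)).filter (fun w => c s(z, w) ∉ cM)).card + m := by
        intro z
        have h0 := Finset.card_filter_add_card_filter_not
          (s := U.filter (fun w => G.Adj z w)) (p := fun w => c s(z, w) ∉ cM)
        have hold : ((U.filter (fun w => G.Adj z w)).filter
            (fun w => ¬ c s(z, w) ∉ cM)).card ≤ m := by
          rw [← hcMcard]
          apply hcnt z _ cM
          · intro w hw
            exact (Finset.mem_filter.mp ((Finset.mem_filter.mp hw).1)).2
          · intro w hw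
            exact not_not.mp (Finset.mem_filter.mp hw).2
        omega
      have hx := hsplitz x
      have hy := hsplitz y
      omega
  -- cross-count bound
  have hcross : ∑ z ∈ W, (U.filter (fun w => G.Adj z w)).card ≤
      b * ((n - 2 * m) + (m - b)) + (m - b) * (2 * m + 8) := by
    have hdisj' : (↑M : Set (Sym2 V)).PairwiseDisjoint epts := by
      intro e he f hf hef
      exact heptsdisj e (Finset.mem_coe.mp he) f (Finset.mem_coe.mp hf) hef
    rw [hWdef, Finset.sum_biUnion hdisj']
    have hstep : ∑ e ∈ M, ∑ z ∈ epts e, (U.filter (fun w => G.Adj z w)).card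
        ≤ ∑ e ∈ M, (if e ∈ B then (n - 2 * m) + (m - b) else 2 * m + 8) :=
      Finset.sum_le_sum hR2
    have hfilterB : M.filter (fun e => e ∈ B) = B := by
      ext e
      simp only [Finset.mem_filter]
      exact ⟨fun h => h.2, fun h => ⟨hBM h, h⟩⟩
    have hfilterB' : (M.filter (fun e => e ∉ B)).card = m - b := by
      have h0 := Finset.card_filter_add_card_filter_not (s := M) (p := fun e => e ∈ B)
      rw [hfilterB] at h0
      omega
    have hsplitsum : ∑ e ∈ M, (if e ∈ B then (n - 2 * m) + (m - b) else 2 * m + 8)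
        = b * ((n - 2 * m) + (m - b)) + (m - b) * (2 * m + 8) := by
      rw [← Finset.sum_filter_add_sum_filter_not M (fun e => e ∈ B)]
      rw [Finset.sum_congr rfl (fun e he => if_pos (Finset.mem_filter.mp he).2),
          Finset.sum_congr rfl (fun e he => if_neg (Finset.mem_filter.mp he).2)]
      rw [Finset.sum_const, Finset.sum_const, smul_eq_mul, smul_eq_mul, hfilterB, hfilterB']
    omega
  -- partition of the vertex set
  have hUunion : U ∪ W = univ := by
    ext v
    simp only [Finset.mem_union, hUdef, Finset.mem_compl, Finset.mem_univ, iff_true]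
    exact Or.symm (em (v ∈ W))
  have hUWdisj : Disjoint U W := by
    rw [Finset.disjoint_left]
    intro a ha ha'
    rw [hUdef] at ha
    exact (Finset.mem_compl.mp ha) ha'
  -- degree splitting
  have hsplit : ∀ v : V, (univ.filter (fun w => G.Adj v w)).card =
      (U.filter (fun w => G.Adj v w)).card + (W.filter (fun w => G.Adj v w)).card := by
    intro v
    rw [← hUunion, Finset.filter_union,
      Finset.card_union_of_disjoint (Finset.disjoint_filter_filter hUWdisj)]
  -- double counting of cross edges
  have hswap : ∑ w ∈ U, (W.filter (fun v => G.Adj w v)).card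
      = ∑ z ∈ W, (U.filter (fun v => G.Adj z v)).card := by
    have h1 : ∀ w : V, (W.filter (fun v => G.Adj w v)).card
        = ∑ z ∈ W, if G.Adj w z then 1 else 0 := fun w => Finset.card_filter _ _
    have h2 : ∀ z : V, (U.filter (fun v => G.Adj z v)).card
        = ∑ w ∈ U, if G.Adj w z then 1 else 0 := by
      intro z
      rw [Finset.card_filter]
      exact Finset.sum_congr rfl (fun w _ => if_congr (G.adj_comm z w) rfl rfl)
    simp only [h1, h2]
    exact Finset.sum_comm
  -- inner degree bound
  have hdegW : ∀ z ∈ W, (W.filter (fun v => G.Adj z v)).card ≤ 2 * m := by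
    intro z _
    calc (W.filter (fun v => G.Adj z v)).card ≤ W.card :=
          Finset.card_le_card (Finset.filter_subset _ _)
    _ = 2 * m := hWcard
  -- assemble the degree sum bound
  have htotal : ∑ v : V, (univ.filter (fun w => G.Adj v w)).card ≤
      (m - b) * (n - 2 * m)
        + 2 * (b * ((n - 2 * m) + (m - b)) + (m - b) * (2 * m + 8))
        + 2 * m * (2 * m) := by
    have hsplitsum : ∑ v : V, (univ.filter (fun w => G.Adj v w)).card
        = ∑ v ∈ U, (univ.filter (fun w => G.Adj v w)).card
          + ∑ v ∈ W, (univ.filter (fun w => G.Adj v w)).card := by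
      rw [← Finset.sum_union hUWdisj, hUunion]
    have hA : ∑ v ∈ U, (univ.filter (fun w => G.Adj v w)).card
        ≤ (m - b) * (n - 2 * m) + ∑ v ∈ U, (W.filter (fun w => G.Adj v w)).card := by
      have e1 : ∑ v ∈ U, (univ.filter (fun w => G.Adj v w)).card
          = ∑ v ∈ U, ((U.filter (fun w => G.Adj v w)).card
            + (W.filter (fun w => G.Adj v w)).card) :=
        Finset.sum_congr rfl (fun v _ => hsplit v)
      rw [e1, Finset.sum_add_distrib]
      have e2 : ∑ v ∈ U, (U.filter (fun w => G.Adj v w)).card ≤ (m - b) * (n - 2 * m) := by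
        calc ∑ v ∈ U, (U.filter (fun w => G.Adj v w)).card ≤ ∑ _v ∈ U, (m - b) :=
              Finset.sum_le_sum hR1
        _ = U.card * (m - b) := by rw [Finset.sum_const, smul_eq_mul]
        _ = (m - b) * (n - 2 * m) := by rw [hUcard, Nat.mul_comm]
      omega
    have hB2 : ∑ v ∈ W, (univ.filter (fun w => G.Adj v w)).card
        ≤ ∑ z ∈ W, (U.filter (fun w => G.Adj z w)).card + 2 * m * (2 * m) := by
      have e1 : ∑ v ∈ W, (univ.filter (fun w => G.Adj v w)).card
          = ∑ v ∈ W, ((U.filter (fun w => G.Adj v w)).card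
            + (W.filter (fun w => G.Adj v w)).card) :=
        Finset.sum_congr rfl (fun v _ => hsplit v)
      rw [e1, Finset.sum_add_distrib]
      have e2 : ∑ v ∈ W, (W.filter (fun w => G.Adj v w)).card ≤ 2 * m * (2 * m) := by
        calc ∑ v ∈ W, (W.filter (fun w => G.Adj v w)).card ≤ ∑ _v ∈ W, 2 * m :=
              Finset.sum_le_sum hdegW
        _ = W.card * (2 * m) := by rw [Finset.sum_const, smul_eq_mul]
        _ = 2 * m * (2 * m) := by rw [hWcard]
      omega
    have hswap' : ∑ v ∈ U, (W.filter (fun w => G.Adj v w)).card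
        = ∑ z ∈ W, (U.filter (fun w => G.Adj z w)).card := hswap
    omega
  -- final contradiction
  have hfin : 2 * k * n ≤ (m - b) * (n - 2 * m)
        + 2 * (b * ((n - 2 * m) + (m - b)) + (m - b) * (2 * m + 8))
        + 2 * m * (2 * m) := le_trans hsum htotal
  obtain ⟨u, hu⟩ : ∃ u, n = u + 2 * m := ⟨n - 2 * m, by omega⟩
  obtain ⟨d, hd⟩ : ∃ d, m = d + b := ⟨m - b, by omega⟩
  have hub : n - 2 * m = u := by omega
  have hdb : m - b = d := by omega
  rw [hub, hdb] at hfin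
  exact arith_contra k m b n u d hk' hn hu hd hfin
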